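/- (Viscosity subsolution property of the value function, part of Theorem 4.2.) For every (t,x) ∈ (0,T)×ℝ and every (q₀,p₀,P₀) in the parabolic superjet of V at (t,x), one has q₀ + inf over (q,π) ∈ [0,∞)×[0,∞) of G(t,x,q,π,p₀,P₀) ≥ 0. Moreover V(T,x) = ½x² for all x ∈ ℝ. -/

import Mathlib

open Real Set Asymptotics
open Filter Topology

lemma poly_extract (x α β : ℝ)
    (hev : ∀ ε > (0:ℝ), ∀ᶠ y in 𝓝 x, α*(y-x) + β*(y-x)^2 ≤ ε*(y-x)^2) :
    α = 0 ∧ β ≤ 0 := by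
  have hβ : β ≤ 0 := by
    refine le_of_forall_pos_le_add (fun ε hε => ?_)
    rw [zero_add]
    rcases le_or_gt 0 α with hα | hα
    · have hE : ∀ᶠ y in 𝓝[>] x, (α*(y-x) + β*(y-x)^2 ≤ ε*(y-x)^2) ∧ y ∈ Ioi x :=
        ((hev ε hε).filter_mono nhdsWithin_le_nhds).and self_mem_nhdsWithin
      obtain ⟨y, hy, hyx⟩ := hE.exists
      have h1 : 0 < y - x := sub_pos.mpr hyx
      nlinarith [mul_nonneg hα h1.le, mul_pos h1 h1]
    · have hE : ∀ᶠ y in 𝓝[<] x, (α*(y-x) + β*(y-x)^2 ≤ ε*(y-x)^2) ∧ y ∈ Iio x :=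
        ((hev ε hε).filter_mono nhdsWithin_le_nhds).and self_mem_nhdsWithin
      obtain ⟨y, hy, hyx⟩ := hE.exists
      have h1 : y - x < 0 := sub_neg.mpr hyx
      nlinarith [mul_nonneg (neg_nonneg.mpr hα.le) (neg_nonneg.mpr h1.le),
        mul_pos (neg_pos.mpr h1) (neg_pos.mpr h1)]
  have htend : Filter.Tendsto (fun y => (1 - β)*(y - x)) (𝓝 x) (𝓝 0) := by
    have : Filter.Tendsto (fun y => (1 - β)*(y - x)) (𝓝 x) (𝓝 ((1-β)*(x-x))) :=
      (continuous_const.mul (continuous_id.sub continuous_const)).tendsto x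
    simpa using this
  have hα1 : α ≤ 0 := by
    refine ge_of_tendsto (htend.mono_left (nhdsWithin_le_nhds : 𝓝[>] x ≤ 𝓝 x)) ?_
    filter_upwards [(hev 1 one_pos).filter_mono nhdsWithin_le_nhds,
      self_mem_nhdsWithin (s := Ioi x)] with y hy hyx
    have h1 : 0 < y - x := sub_pos.mpr hyx
    nlinarith
  have hα2 : 0 ≤ α := by
    refine le_of_tendsto (htend.mono_left (nhdsWithin_le_nhds : 𝓝[<] x ≤ 𝓝 x)) ?_
    filter_upwards [(hev 1 one_pos).filter_mono nhdsWithin_le_nhds,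
      self_mem_nhdsWithin (s := Iio x)] with y hy hyx
    have h1 : y - x < 0 := sub_neg.mpr hyx
    nlinarith
  exact ⟨le_antisymm hα1 hα2, hβ⟩

lemma time_extract (t L q₀ : ℝ) (u : ℝ → ℝ) (hu : HasDerivAt u L t)
    (hev : ∀ ε > (0:ℝ), ∀ᶠ s in 𝓝 t, u s - u t - q₀*(s-t) ≤ ε*|s-t|) : L ≤ q₀ := by
  refine le_of_forall_pos_le_add (fun ε hε => ?_)
  have hd := (hasDerivAt_iff_isLittleO.mp hu).bound (half_pos hε)
  have hE : ∀ᶠ s in 𝓝[>] t,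
      ((u s - u t - q₀*(s-t) ≤ ε/2*|s-t|) ∧ ‖u s - u t - (s - t) • L‖ ≤ ε/2 * ‖s - t‖)
        ∧ s ∈ Ioi t :=
    (((hev (ε/2) (half_pos hε)).and hd).filter_mono nhdsWithin_le_nhds).and self_mem_nhdsWithin
  obtain ⟨s, ⟨h1, h2⟩, h3⟩ := hE.exists
  have hst : 0 < s - t := sub_pos.mpr h3
  rw [Real.norm_eq_abs, Real.norm_eq_abs, smul_eq_mul] at h2
  rw [abs_of_pos hst] at h1 h2
  have h2' := (abs_le.mp h2).1
  nlinarith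

set_option maxHeartbeats 2000000 in
theorem stmt_11
    (T r μ σ a b η θ d γ : ℝ)
    (hT : 0 < T) (hr : 0 < r) (hσ : 0 < σ) (ha : 0 < a) (hb : 0 < b)
    (hη : 0 < η) (hμr : r < μ)
    (f : ℝ) (hf : f = a * θ - a * η + (d - γ) * r)
    (A₁ : ℝ) (hA₁ : A₁ = -(μ - r) ^ 2 / (2 * σ ^ 2) - a ^ 2 * η ^ 2 / (2 * b ^ 2))
    (g₁ : ℝ → ℝ) (hg₁ : ∀ t, g₁ t = f * (exp (r * (T - t)) - 1) / r)
    (G : ℝ → ℝ → ℝ → ℝ → ℝ → ℝ → ℝ)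
    (hG : ∀ t x q pi p P, G t x q pi p P
      = p * (r * x + a * η * q + (μ - r) * pi + f)
        + (1 / 2) * P * (b ^ 2 * q ^ 2 + σ ^ 2 * pi ^ 2))
    (V : ℝ → ℝ → ℝ)
    (hV : ∀ t x, V t x =
      if 0 ≤ exp (r * (T - t)) * x + g₁ t
      then (1 / 2) * (exp (r * (T - t)) * x + g₁ t) ^ 2
      else (1 / 2) * exp (2 * A₁ * (T - t)) * (exp (r * (T - t)) * x + g₁ t) ^ 2) :
    (∀ t x : ℝ, t ∈ Ioo (0 : ℝ) T → ∀ q₀ p₀ P₀ : ℝ,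
      ((fun p : ℝ × ℝ =>
          max (V p.1 p.2 - V t x - q₀ * (p.1 - t) - p₀ * (p.2 - x)
            - (1 / 2) * P₀ * (p.2 - x) ^ 2) 0)
        =o[nhdsWithin (t, x) (Icc (0 : ℝ) T ×ˢ (univ : Set ℝ))]
        (fun p : ℝ × ℝ => |p.1 - t| + |p.2 - x| ^ 2)) →
      ∀ q pi : ℝ, 0 ≤ q → 0 ≤ pi → 0 ≤ q₀ + G t x q pi p₀ P₀) ∧
    (∀ x : ℝ, V T x = (1 / 2) * x ^ 2) := by
  constructor
  · intro t x ht q₀ p₀ P₀ h q pi hq hpi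
    have hF : nhdsWithin ((t,x) : ℝ×ℝ) (Icc (0:ℝ) T ×ˢ (univ : Set ℝ)) = 𝓝 (t,x) :=
      nhdsWithin_eq_nhds.mpr (prod_mem_nhds (Icc_mem_nhds ht.1 ht.2) univ_mem)
    rw [hF] at h
    obtain ⟨E, hE⟩ : ∃ E', E' = exp (r * (T - t)) := ⟨_, rfl⟩
    have hEpos : 0 < E := hE ▸ exp_pos _
    obtain ⟨c, hc⟩ : ∃ c', c' = exp (2 * A₁ * (T - t)) := ⟨_, rfl⟩
    have hcpos : 0 < c := hc ▸ exp_pos _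
    obtain ⟨φ, hφdef⟩ : ∃ p, p = E * x + g₁ t := ⟨_, rfl⟩
    -- key eventual inequality
    have key : ∀ ε > (0:ℝ), ∀ᶠ p : ℝ×ℝ in 𝓝 (t,x),
        V p.1 p.2 - V t x - q₀*(p.1-t) - p₀*(p.2-x) - (1/2)*P₀*(p.2-x)^2
          ≤ ε*(|p.1-t| + |p.2-x|^2) := by
      intro ε hε
      filter_upwards [h.bound hε] with p hp
      rw [Real.norm_eq_abs, Real.norm_eq_abs,
        abs_of_nonneg (le_max_right _ _), abs_of_nonneg (by positivity)] at hp
      exact le_trans (le_max_left _ _) hp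
    have keyT : ∀ ε > (0:ℝ), ∀ᶠ s in 𝓝 t, V s x - V t x - q₀*(s-t) ≤ ε*|s-t| := by
      intro ε hε
      have hcurve : Tendsto (fun s : ℝ => ((s,x) : ℝ×ℝ)) (𝓝 t) (𝓝 (t,x)) :=
        (continuous_id.prodMk continuous_const).tendsto t
      filter_upwards [hcurve.eventually (key ε hε)] with s hs
      simpa using hs
    have keyX : ∀ ε > (0:ℝ), ∀ᶠ y in 𝓝 x,
        V t y - V t x - p₀*(y-x) - (1/2)*P₀*(y-x)^2 ≤ ε*(y-x)^2 := by
      intro ε hε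
      have hcurve : Tendsto (fun y : ℝ => ((t,y) : ℝ×ℝ)) (𝓝 x) (𝓝 (t,x)) :=
        (continuous_const.prodMk continuous_id).tendsto x
      filter_upwards [hcurve.eventually (key ε hε)] with y hy
      simpa [sq_abs] using hy
    -- the function ψ
    obtain ⟨ψ, hψ⟩ : ∃ F : ℝ → ℝ,
        F = fun s => exp (r * (T - s)) * x + f * (exp (r * (T - s)) - 1) / r := ⟨_, rfl⟩
    have hψg : ∀ s, exp (r * (T - s)) * x + g₁ s = ψ s := fun s => by rw [hg₁ s, hψ]
    have hψt : ψ t = φ := by rw [hφdef, hg₁ t, hψ, hE]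
    have hexp : HasDerivAt (fun s => exp (r * (T - s))) (E * -r) t := by
      have h0 : HasDerivAt (fun s : ℝ => r * (T - s)) (-r) t := by
        simpa using ((hasDerivAt_id t).const_sub T).const_mul r
      rw [hE]
      simpa using h0.exp
    have hψd : HasDerivAt ψ (-(E * (r * x + f))) t := by
      have h2 := (hexp.mul_const x).add (((hexp.sub_const 1).const_mul f).div_const r)
      rw [hψ]
      refine h2.congr_deriv ?_
      field_simp
      ring
    have hCd : HasDerivAt (fun s => exp (2 * A₁ * (T - s))) (c * -(2*A₁)) t := by
      have h0 : HasDerivAt (fun s : ℝ => 2 * A₁ * (T - s)) (-(2*A₁)) t := by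
        simpa using ((hasDerivAt_id t).const_sub T).const_mul (2*A₁)
      rw [hc]
      simpa using h0.exp
    have hnn : (0:ℝ) ≤ b^2*q^2 + σ^2*pi^2 := by positivity
    rcases lt_trichotomy φ 0 with hφ | hφ | hφ
    · -- φ < 0 case
      have hsign : ∀ᶠ s in 𝓝 t, ψ s < 0 :=
        hψd.continuousAt (Iio_mem_nhds (by rw [hψt]; exact hφ))
      have hVtime : (fun s => V s x) =ᶠ[𝓝 t]
          (fun s => (1/2) * (exp (2 * A₁ * (T - s)) * (ψ s)^2)) := by
        filter_upwards [hsign] with s hs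
        rw [hV s x, hψg s, if_neg (not_le.mpr hs), mul_assoc]
      have hud : HasDerivAt (fun s => V s x)
          (-A₁*c*φ^2 - c*φ*(E*(r*x+f))) t := by
        refine HasDerivAt.congr_of_eventuallyEq ?_ hVtime
        have h3 := (hCd.mul (hψd.pow 2)).const_mul (1/2)
        refine h3.congr_deriv ?_
        rw [Pi.pow_apply, hψt, ← hc]
        norm_num
        ring
      have hq₀ : -A₁*c*φ^2 - c*φ*(E*(r*x+f)) ≤ q₀ := time_extract t _ q₀ _ hud keyT
      have hsignX : ∀ᶠ y in 𝓝 x, E * y + g₁ t < 0 := by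
        have hcont : Continuous (fun y : ℝ => E * y + g₁ t) :=
          (continuous_const.mul continuous_id).add continuous_const
        exact hcont.continuousAt (Iio_mem_nhds (show E * x + g₁ t < 0 from hφdef ▸ hφ))
      have hVx : V t x = (1/2)*c*φ^2 := by
        rw [hV t x, ← hE, ← hc, ← hφdef, if_neg (not_le.mpr hφ)]
      obtain ⟨hp₀, hP₀⟩ := poly_extract x (c*E*φ - p₀) ((1/2)*c*E^2 - (1/2)*P₀) (by
        intro ε hε
        filter_upwards [keyX ε hε, hsignX] with y h1 h2
        rw [hV t y, ← hE, ← hc, if_neg (not_le.mpr h2), hVx] at h1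
        have e : (c*E*φ - p₀)*(y-x) + ((1/2)*c*E^2 - (1/2)*P₀)*(y-x)^2
            = (1/2)*c*(E*y + g₁ t)^2 - (1/2)*c*φ^2 - p₀*(y-x) - (1/2)*P₀*(y-x)^2 := by
          rw [hφdef]; ring
        rw [e]
        linarith)
      have hp₀' : p₀ = c*E*φ := by linarith
      have hP₀' : c*E^2 ≤ P₀ := by linarith
      have hmulP : c*E^2*(b^2*q^2+σ^2*pi^2) ≤ P₀*(b^2*q^2+σ^2*pi^2) :=
        mul_le_mul_of_nonneg_right hP₀' hnn
      have hkey : 0 ≤ -A₁*c*φ^2 + c*E*φ*(a*η*q) + c*E*φ*((μ-r)*pi)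
          + (1/2)*(c*E^2)*(b^2*q^2+σ^2*pi^2) := by
        have h2 : (-A₁*c*φ^2 + c*E*φ*(a*η*q) + c*E*φ*((μ-r)*pi)
              + (1/2)*(c*E^2)*(b^2*q^2+σ^2*pi^2)) * (2*σ^2*b^2)
            = c*(σ^2*(a*η*φ + b^2*E*q)^2 + b^2*((μ-r)*φ + σ^2*E*pi)^2) := by
          rw [hA₁]; field_simp; ring
        have h3 : 0 ≤ c*(σ^2*(a*η*φ + b^2*E*q)^2 + b^2*((μ-r)*φ + σ^2*E*pi)^2) := by positivity
        have h4 : (0:ℝ) < 2*σ^2*b^2 := by positivity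
        nlinarith [h2, h3, h4]
      rw [hG, hp₀']
      nlinarith [hq₀, hkey, hmulP]
    · -- φ = 0 case
      have hVx : V t x = 0 := by
        rw [hV t x, ← hE, ← hφdef, hφ]
        simp
      have hVnn : ∀ s y, 0 ≤ V s y := by
        intro s y
        rw [hV s y]
        split_ifs <;> positivity
      have hq₀ : 0 ≤ q₀ := by
        refine le_of_forall_pos_le_add (fun ε hε => ?_)
        have hE' : ∀ᶠ s in 𝓝[>] t, (V s x - V t x - q₀*(s-t) ≤ ε*|s-t|) ∧ s ∈ Ioi t :=
          ((keyT ε hε).filter_mono nhdsWithin_le_nhds).and self_mem_nhdsWithin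
        obtain ⟨s, h1, h2⟩ := hE'.exists
        have hst : 0 < s - t := sub_pos.mpr h2
        rw [hVx, abs_of_pos hst] at h1
        nlinarith [hVnn s x]
      obtain ⟨hp₀, hP₀⟩ := poly_extract x (-p₀) (-((1/2)*P₀)) (by
        intro ε hε
        filter_upwards [keyX ε hε] with y h1
        rw [hVx] at h1
        have h2 := hVnn t y
        nlinarith)
      have hp₀' : p₀ = 0 := by linarith
      have hP₀' : 0 ≤ P₀ := by linarith
      rw [hG, hp₀']
      nlinarith [mul_nonneg hP₀' hnn]
    · -- φ > 0 case
      have hsign : ∀ᶠ s in 𝓝 t, 0 < ψ s :=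
        hψd.continuousAt (Ioi_mem_nhds (by rw [hψt]; exact hφ))
      have hVtime : (fun s => V s x) =ᶠ[𝓝 t] (fun s => (1/2) * (ψ s)^2) := by
        filter_upwards [hsign] with s hs
        rw [hV s x, hψg s, if_pos hs.le]
      have hud : HasDerivAt (fun s => V s x) (-(φ*(E*(r*x+f)))) t := by
        refine HasDerivAt.congr_of_eventuallyEq ?_ hVtime
        have h3 := (hψd.pow 2).const_mul (1/2)
        refine h3.congr_deriv ?_
        rw [hψt]
        norm_num
        ring
      have hq₀ : -(φ*(E*(r*x+f))) ≤ q₀ := time_extract t _ q₀ _ hud keyT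
      have hsignX : ∀ᶠ y in 𝓝 x, 0 < E * y + g₁ t := by
        have hcont : Continuous (fun y : ℝ => E * y + g₁ t) :=
          (continuous_const.mul continuous_id).add continuous_const
        exact hcont.continuousAt (Ioi_mem_nhds (show 0 < E * x + g₁ t from hφdef ▸ hφ))
      have hVx : V t x = (1/2)*φ^2 := by
        rw [hV t x, ← hE, ← hφdef, if_pos hφ.le]
      obtain ⟨hp₀, hP₀⟩ := poly_extract x (E*φ - p₀) ((1/2)*E^2 - (1/2)*P₀) (by
        intro ε hε
        filter_upwards [keyX ε hε, hsignX] with y h1 h2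
        rw [hV t y, ← hE, if_pos h2.le, hVx] at h1
        have e : (E*φ - p₀)*(y-x) + ((1/2)*E^2 - (1/2)*P₀)*(y-x)^2
            = (1/2)*(E*y + g₁ t)^2 - (1/2)*φ^2 - p₀*(y-x) - (1/2)*P₀*(y-x)^2 := by
          rw [hφdef]; ring
        rw [e]
        linarith)
      have hp₀' : p₀ = E*φ := by linarith
      have hP₀' : E^2 ≤ P₀ := by linarith
      have hmulP : E^2*(b^2*q^2+σ^2*pi^2) ≤ P₀*(b^2*q^2+σ^2*pi^2) :=
        mul_le_mul_of_nonneg_right hP₀' hnn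
      have t1 : 0 ≤ E*φ*(a*η*q) :=
        mul_nonneg (mul_nonneg hEpos.le hφ.le) (mul_nonneg (mul_nonneg ha.le hη.le) hq)
      have t2 : 0 ≤ E*φ*((μ-r)*pi) :=
        mul_nonneg (mul_nonneg hEpos.le hφ.le) (mul_nonneg (sub_pos.mpr hμr).le hpi)
      have t3 : 0 ≤ E^2*(b^2*q^2+σ^2*pi^2) := by positivity
      rw [hG, hp₀']
      nlinarith [hq₀, t1, t2, t3, hmulP]
  · intro x
    have h1 : T - T = 0 := sub_self T
    rw [hV T x, hg₁ T, h1]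
    norm_num
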